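/- Let k be a field of characteristic zero, let a and b be units of k⟦t⟧, and let n, m be natural numbers with 3n ≠ 2m. Let W be the Weierstrass curve y² = x³ + a tⁿ x + b tᵐ over k((t)). Then the discriminant of W is nonzero, the j-invariant of W lies in the subring k⟦t⟧ of k((t)), and its t-adic order equals 3n − min(3n, 2m). -/

import Mathlib

/-- The Laurent series `t`, i.e. the image of the power series variable in `k((t))`. -/
noncomputable def tL (k : Type*) [Field k] : LaurentSeries k :=
  ((PowerSeries.X : PowerSeries k) : LaurentSeries k)

set_option maxHeartbeats 1000000

open PowerSeries

lemma aux_isUnit_add {k : Type*} [Field k] {c : PowerSeries k} (d : PowerSeries k)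
    (hc : IsUnit c) {r : ℕ} (hr : 0 < r) : IsUnit (c + d * X ^ r) := by
  rw [PowerSeries.isUnit_iff_constantCoeff] at *
  simpa [map_mul, map_pow, PowerSeries.constantCoeff_X, zero_pow hr.ne'] using hc

lemma aux_key {k : Type*} [Field k] {c : PowerSeries k} (d : PowerSeries k)
    (hc : IsUnit c) {r s : ℕ} (hrs : r < s) :
    ∃ u : (PowerSeries k)ˣ, c * X ^ r + d * X ^ s = (u : PowerSeries k) * X ^ r := by
  obtain ⟨u, hu⟩ := aux_isUnit_add d hc (by omega : 0 < s - r)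
  refine ⟨u, ?_⟩
  rw [hu, add_mul, mul_assoc, ← pow_add, Nat.sub_add_cancel hrs.le]

theorem stmt_13 (k : Type*) [Field k] [CharZero k] (a b : (PowerSeries k)ˣ)
    (n m : ℕ) (h : 3 * n ≠ 2 * m) :
    (WeierstrassCurve.mk 0 0 0
        (((a : PowerSeries k) : LaurentSeries k) * tL k ^ n)
        (((b : PowerSeries k) : LaurentSeries k) * tL k ^ m)).Δ ≠ 0 ∧
    ∃ f : PowerSeries k,
      (f : LaurentSeries k) =
        (WeierstrassCurve.mk 0 0 0
            (((a : PowerSeries k) : LaurentSeries k) * tL k ^ n)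
            (((b : PowerSeries k) : LaurentSeries k) * tL k ^ m)).c₄ ^ 3 /
          (WeierstrassCurve.mk 0 0 0
              (((a : PowerSeries k) : LaurentSeries k) * tL k ^ n)
              (((b : PowerSeries k) : LaurentSeries k) * tL k ^ m)).Δ ∧
      f.order = ((3 * n - min (3 * n) (2 * m) : ℕ) : ℕ∞) := by
  haveI : CharZero (PowerSeries k) :=
    charZero_of_injective_ringHom (f := (C : k →+* PowerSeries k)) PowerSeries.C_injective
  haveI : CharZero (LaurentSeries k) :=
    charZero_of_injective_ringHom (f := HahnSeries.ofPowerSeries ℤ k)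
      HahnSeries.ofPowerSeries_injective
  set φ : PowerSeries k →+* LaurentSeries k := HahnSeries.ofPowerSeries ℤ k with hφ
  set P : PowerSeries k := (a : PowerSeries k)
  set Q : PowerSeries k := (b : PowerSeries k)
  set A : LaurentSeries k := φ P
  set B : LaurentSeries k := φ Q
  set T : LaurentSeries k := tL k with hT
  have hTphi : T = φ X := rfl
  -- the key divisor
  set D : PowerSeries k := 4 * P ^ 3 * X ^ (3 * n) + 27 * Q ^ 2 * X ^ (2 * m) with hD
  have h4 : IsUnit (4 * P ^ 3 : PowerSeries k) := by
    refine IsUnit.mul ?_ (a.isUnit.pow 3)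
    rw [PowerSeries.isUnit_iff_constantCoeff, map_ofNat]
    exact isUnit_iff_ne_zero.mpr (by norm_num)
  have h27 : IsUnit (27 * Q ^ 2 : PowerSeries k) := by
    refine IsUnit.mul ?_ (b.isUnit.pow 2)
    rw [PowerSeries.isUnit_iff_constantCoeff, map_ofNat]
    exact isUnit_iff_ne_zero.mpr (by norm_num)
  obtain ⟨u, hu⟩ : ∃ u : (PowerSeries k)ˣ,
      D = (u : PowerSeries k) * X ^ (min (3 * n) (2 * m)) := by
    rcases lt_or_gt_of_ne h with hlt | hgt
    · obtain ⟨u, hu⟩ := aux_key (27 * Q ^ 2) h4 hlt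
      exact ⟨u, by rw [hD, hu, min_eq_left hlt.le]⟩
    · obtain ⟨u, hu⟩ := aux_key (4 * P ^ 3) h27 hgt
      refine ⟨u, ?_⟩
      rw [hD, add_comm, hu, min_eq_right hgt.le]
  -- discriminant
  set W := WeierstrassCurve.mk 0 0 0 (A * T ^ n) (B * T ^ m) with hW
  have hΔ : W.Δ = -16 * φ D := by
    simp only [hW, WeierstrassCurve.Δ, WeierstrassCurve.b₂, WeierstrassCurve.b₄,
      WeierstrassCurve.b₆, WeierstrassCurve.b₈, hD, map_add, map_mul, map_pow,
      map_ofNat, ← hTphi]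
    ring
  have hXne : (φ X : LaurentSeries k) ≠ 0 := by
    rw [map_ne_zero_iff φ HahnSeries.ofPowerSeries_injective]
    exact X_ne_zero
  have huφ : φ (u : PowerSeries k) ≠ 0 := by
    rw [map_ne_zero_iff φ HahnSeries.ofPowerSeries_injective]
    exact u.ne_zero
  have hΔne : W.Δ ≠ 0 := by
    rw [hΔ, hu, map_mul, map_pow]
    refine mul_ne_zero (by norm_num) (mul_ne_zero huφ (pow_ne_zero _ hXne))
  refine ⟨hΔne, ?_⟩
  -- the j-invariant
  set e : ℕ := 3 * n - min (3 * n) (2 * m) with he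
  have hemin : e + min (3 * n) (2 * m) = 3 * n := by omega
  refine ⟨6912 * P ^ 3 * ((u⁻¹ : (PowerSeries k)ˣ) : PowerSeries k) * X ^ e, ?_, ?_⟩
  · have hc₄ : W.c₄ = -48 * A * T ^ n := by
      simp only [hW, WeierstrassCurve.c₄, WeierstrassCurve.b₂, WeierstrassCurve.b₄]
      ring
    rw [eq_div_iff hΔne, hc₄, hΔ, hu]
    rw [map_mul, map_mul, map_mul, map_pow, map_mul, map_pow, map_ofNat]
    rw [map_pow]
    have huu : φ ((u⁻¹ : (PowerSeries k)ˣ) : PowerSeries k) * φ (u : PowerSeries k) = 1 := by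
      rw [← map_mul, Units.inv_mul, map_one]
    calc 6912 * φ P ^ 3 * φ ((u⁻¹ : (PowerSeries k)ˣ) : PowerSeries k) * φ X ^ e *
          (-16 * (φ (u : PowerSeries k) * φ X ^ (3 * n ⊓ 2 * m)))
        = -110592 * φ P ^ 3 * (φ X ^ e * φ X ^ (3 * n ⊓ 2 * m)) *
            (φ ((u⁻¹ : (PowerSeries k)ˣ) : PowerSeries k) * φ (u : PowerSeries k)) := by ring
      _ = (-48 * A * T ^ n) ^ 3 := by
          rw [huu, ← pow_add, hemin, hTphi]
          ring
  · have h6912 : IsUnit (6912 : PowerSeries k) := by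
      rw [PowerSeries.isUnit_iff_constantCoeff, map_ofNat]
      exact isUnit_iff_ne_zero.mpr (by norm_num)
    rw [PowerSeries.order_mul, PowerSeries.order_X_pow,
      PowerSeries.order_zero_of_unit ((h6912.mul (a.isUnit.pow 3)).mul u⁻¹.isUnit), zero_add]
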